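/- Let Z_1, …, Z_N be i.i.d. random variables, each distributed as the product X·Y of independent nonnegative random variables with X^2 exponentially distributed with mean l_i > 0 and Y^2 exponentially distributed with mean l_r > 0. Then E[(Z_1 + ⋯ + Z_N)^2] = [ (π^2/16)·N^2 + (1 − π^2/16)·N ]·l_i·l_r = G_bf·l_i·l_r. -/

import Mathlib

open MeasureTheory ProbabilityTheory Real Set

lemma expPDFReal_eq' (r x : ℝ) :
    exponentialPDFReal r x = if 0 ≤ x then r * rexp (-(r * x)) else 0 := by
  rw [exponentialPDFReal, gammaPDFReal]
  simp only [rpow_one, Real.Gamma_one, div_one, sub_self, rpow_zero, mul_one]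

lemma expMeasure_eq_withDensity (r : ℝ) :
    expMeasure r = (volume : Measure ℝ).withDensity
      (fun x => ((exponentialPDFReal r x).toNNReal : ENNReal)) := rfl

lemma integral_expMeasure' {r : ℝ} (hr : 0 < r) (f : ℝ → ℝ) :
    ∫ x, f x ∂(expMeasure r) = ∫ x in Ioi (0:ℝ), (r * rexp (-(r * x))) * f x := by
  rw [expMeasure_eq_withDensity,
    integral_withDensity_eq_integral_smul ((measurable_exponentialPDFReal r).real_toNNReal) f]
  rw [← setIntegral_eq_integral_of_forall_compl_eq_zero
      (s := Ici (0:ℝ)) (f := fun x => (exponentialPDFReal r x).toNNReal • f x) ?_,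
    integral_Ici_eq_integral_Ioi]
  · refine setIntegral_congr_fun measurableSet_Ioi fun x hx => ?_
    have hx0 : (0:ℝ) ≤ x := le_of_lt hx
    have he : exponentialPDFReal r x = r * rexp (-(r * x)) := by
      rw [expPDFReal_eq', if_pos hx0]
    rw [NNReal.smul_def, Real.coe_toNNReal _ (exponentialPDFReal_nonneg hr x), he, smul_eq_mul]
  · intro x hx
    have he : exponentialPDFReal r x = 0 := by
      rw [expPDFReal_eq', if_neg (by simpa using hx)]
    show (exponentialPDFReal r x).toNNReal • f x = 0
    rw [he]
    simp

lemma integrable_expMeasure' {r : ℝ} (hr : 0 < r) {f : ℝ → ℝ}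
    (hi : IntegrableOn (fun x => (r * rexp (-(r * x))) * f x) (Ioi 0)) :
    Integrable f (expMeasure r) := by
  rw [expMeasure_eq_withDensity]
  rw [integrable_withDensity_iff (by
        exact_mod_cast (measurable_exponentialPDFReal r).real_toNNReal.coe_nnreal_ennreal)
      (Filter.Eventually.of_forall fun x => ENNReal.coe_lt_top)]
  set φ : ℝ → ℝ := fun x => f x * (((exponentialPDFReal r x).toNNReal : ENNReal)).toReal with hφ
  have hφeq : ∀ x, φ x = f x * exponentialPDFReal r x := by
    intro x
    show f x * (((exponentialPDFReal r x).toNNReal : ENNReal)).toReal = _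
    rw [ENNReal.coe_toReal, Real.coe_toNNReal _ (exponentialPDFReal_nonneg hr x)]
  have hIoi : IntegrableOn φ (Ioi 0) := by
    refine hi.congr_fun (fun x hx => ?_) measurableSet_Ioi
    rw [hφeq, expPDFReal_eq', if_pos (le_of_lt hx), mul_comm]
  have hIic : IntegrableOn φ (Iic 0) := by
    have hne : ∀ᵐ (x : ℝ), x ≠ 0 := by
      rw [ae_iff]
      simpa using Real.volume_singleton (x := 0)
    have : ∀ᵐ x ∂((volume : Measure ℝ).restrict (Iic 0)), φ x = 0 := by
      filter_upwards [ae_restrict_mem measurableSet_Iic, ae_restrict_of_ae hne] with x hx hx0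
      rw [hφeq, expPDFReal_eq', if_neg (not_le.mpr (lt_of_le_of_ne hx hx0)), mul_zero]
    have h0 : (fun _ : ℝ => (0:ℝ)) =ᶠ[ae ((volume : Measure ℝ).restrict (Iic 0))] φ :=
      this.mono fun x hx => hx.symm
    exact (integrable_zero _ _ _).congr h0
  have := hIic.union hIoi
  rwa [Iic_union_Ioi, integrableOn_univ] at this

lemma exp_moment_int {r s : ℝ} (hr : 0 < r) (hs : -1 < s) :
    IntegrableOn (fun x => (r * rexp (-(r * x))) * x ^ s) (Ioi 0) := by
  have h : IntegrableOn (fun x => r * (x ^ s * rexp (-r * x ^ (1:ℝ)))) (Ioi 0) :=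
    (integrableOn_rpow_mul_exp_neg_mul_rpow hs (zero_lt_one' ℝ) hr).const_mul r
  refine IntegrableOn.congr_fun h (fun x hx => ?_) measurableSet_Ioi
  rw [Real.rpow_one]
  ring_nf

lemma exp_moment_val {r s : ℝ} (hr : 0 < r) (hs : -1 < s) :
    ∫ x in Ioi (0:ℝ), (r * rexp (-(r * x))) * x ^ s = (1/r) ^ s * Real.Gamma (s + 1) := by
  have h1 : ∫ x in Ioi (0:ℝ), (r * rexp (-(r * x))) * x ^ s
      = r * ∫ x in Ioi (0:ℝ), x ^ ((s + 1) - 1) * rexp (-(r * x)) := by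
    rw [← integral_const_mul]
    refine setIntegral_congr_fun measurableSet_Ioi fun x hx => ?_
    rw [add_sub_cancel_right]; ring
  rw [h1, Real.integral_rpow_mul_exp_neg_mul_Ioi (by linarith) hr]
  have h2 : (1/r) ^ (s+1) = (1/r) ^ s * (1/r) := by
    rw [Real.rpow_add (by positivity), Real.rpow_one]
  rw [h2]
  field_simp

/-- basic facts for a nonnegative `W` with `W²` exponential of rate `1/l`. -/
lemma exp_sq_facts {Ω : Type*} [MeasureSpace Ω] [IsProbabilityMeasure (ℙ : Measure Ω)]
    {W : Ω → ℝ} {l : ℝ} (hl : 0 < l) (h0 : ∀ ω, 0 ≤ W ω)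
    (h : Measure.map (fun ω => W ω ^ 2) ℙ = expMeasure (1 / l)) :
    AEMeasurable W ℙ ∧ Integrable W ℙ ∧ (∫ ω, W ω ∂ℙ = Real.sqrt π / 2 * Real.sqrt l)
      ∧ Integrable (fun ω => W ω ^ 2) ℙ ∧ (∫ ω, W ω ^ 2 ∂ℙ = l) := by
  have hr : 0 < 1 / l := by positivity
  have hprob : IsProbabilityMeasure (expMeasure (1/l)) := isProbabilityMeasure_expMeasure hr
  have hW2 : AEMeasurable (fun ω => W ω ^ 2) ℙ := by
    by_contra hc
    rw [Measure.map_of_not_aemeasurable hc] at h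
    have h1 := hprob.measure_univ
    rw [← h] at h1
    simp at h1
  have hWeq : W = fun ω => Real.sqrt (W ω ^ 2) := by
    funext ω; rw [Real.sqrt_sq (h0 ω)]
  have hWae : AEMeasurable W ℙ := by
    rw [hWeq]; exact (Real.continuous_sqrt.measurable).comp_aemeasurable hW2
  -- integrability and value for sqrt
  have hsqInt : Integrable Real.sqrt (expMeasure (1/l)) := by
    refine integrable_expMeasure' hr ?_
    refine (exp_moment_int hr (by norm_num : (-1:ℝ) < 1/2)).congr_fun (fun x hx => ?_)
      measurableSet_Ioi
    rw [Real.sqrt_eq_rpow]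
  have hsqVal : ∫ x, Real.sqrt x ∂(expMeasure (1/l)) = Real.sqrt π / 2 * Real.sqrt l := by
    rw [integral_expMeasure' hr]
    have h1 : ∫ x in Ioi (0:ℝ), (1/l * rexp (-(1/l * x))) * Real.sqrt x
        = ∫ x in Ioi (0:ℝ), (1/l * rexp (-(1/l * x))) * x ^ ((1:ℝ)/2) := by
      refine setIntegral_congr_fun measurableSet_Ioi fun x hx => ?_
      rw [Real.sqrt_eq_rpow]
    rw [h1, exp_moment_val hr (by norm_num : (-1:ℝ) < 1/2)]
    have h2 : (1:ℝ)/(1/l) = l := by field_simp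
    have h3 : ((1:ℝ)/2 + 1) = (1/2 : ℝ) + 1 := rfl
    rw [h2]
    have h4 : Real.Gamma ((1:ℝ)/2 + 1) = (1/2) * Real.Gamma (1/2) :=
      Real.Gamma_add_one (by norm_num)
    rw [h4, Real.Gamma_one_half_eq, ← Real.sqrt_eq_rpow]
    ring
  have hidInt : Integrable (fun x => x) (expMeasure (1/l)) := by
    refine integrable_expMeasure' hr ?_
    refine (exp_moment_int hr (by norm_num : (-1:ℝ) < 1)).congr_fun (fun x hx => ?_)
      measurableSet_Ioi
    simp only [Real.rpow_one]
  have hidVal : ∫ x, x ∂(expMeasure (1/l)) = l := by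
    rw [integral_expMeasure' hr]
    have h1 : ∫ x in Ioi (0:ℝ), (1/l * rexp (-(1/l * x))) * x
        = ∫ x in Ioi (0:ℝ), (1/l * rexp (-(1/l * x))) * x ^ ((1:ℝ)) := by
      refine setIntegral_congr_fun measurableSet_Ioi fun x hx => ?_
      rw [Real.rpow_one]
    rw [h1, exp_moment_val hr (by norm_num : (-1:ℝ) < 1), Real.rpow_one]
    have : Real.Gamma ((1:ℝ) + 1) = 1 * Real.Gamma 1 := Real.Gamma_add_one (by norm_num)
    rw [this, Real.Gamma_one]
    field_simp
  -- transfer to Ω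
  have hWint : Integrable W ℙ := by
    rw [hWeq]
    have := (integrable_map_measure (f := fun ω => W ω ^ 2) (g := Real.sqrt)
      (Real.continuous_sqrt.aestronglyMeasurable) hW2).mp (by rw [h]; exact hsqInt)
    exact this
  have hWval : ∫ ω, W ω ∂ℙ = Real.sqrt π / 2 * Real.sqrt l := by
    conv_lhs => rw [hWeq]
    rw [show (∫ ω, Real.sqrt (W ω ^ 2) ∂ℙ)
        = ∫ x, Real.sqrt x ∂(Measure.map (fun ω => W ω ^ 2) ℙ) from
      (integral_map hW2 (by rw [h]; exact Real.continuous_sqrt.aestronglyMeasurable)).symm,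
      h, hsqVal]
  have hW2int : Integrable (fun ω => W ω ^ 2) ℙ := by
    have := (integrable_map_measure (f := fun ω => W ω ^ 2) (g := fun x => x)
      aestronglyMeasurable_id hW2).mp (by rw [h]; exact hidInt)
    exact this
  have hW2val : ∫ ω, W ω ^ 2 ∂ℙ = l := by
    rw [show (∫ ω, W ω ^ 2 ∂ℙ)
        = ∫ x, x ∂(Measure.map (fun ω => W ω ^ 2) ℙ) from
      (integral_map hW2 (by rw [h]; exact aestronglyMeasurable_id)).symm,
      h, hidVal]
  exact ⟨hWae, hWint, hWval, hW2int, hW2val⟩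

/-- reflect-beamforming gain.
If `Z 1, …, Z N` are i.i.d., each distributed as the product `X·Y` of
independent nonnegative random variables with `X²` exponential of mean
`l_i > 0` and `Y²` exponential of mean `l_r > 0`, then
`E[(Z 1 + ⋯ + Z N)²] = ((π²/16)N² + (1 − π²/16)N)·l_i·l_r = G_bf·l_i·l_r`. -/
theorem stmt_5 {Ω : Type*} [MeasureSpace Ω] [IsProbabilityMeasure (ℙ : Measure Ω)]
    (N : ℕ) (Z : Fin N → Ω → ℝ) (X Y : Ω → ℝ)
    (li lr : ℝ) (hli : 0 < li) (hlr : 0 < lr)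
    (hX0 : ∀ ω, 0 ≤ X ω) (hY0 : ∀ ω, 0 ≤ Y ω)
    (hXYindep : IndepFun X Y ℙ)
    (hX : Measure.map (fun ω => X ω ^ 2) ℙ = expMeasure (1 / li))
    (hY : Measure.map (fun ω => Y ω ^ 2) ℙ = expMeasure (1 / lr))
    (hZindep : iIndepFun Z ℙ)
    (hZdist : ∀ n, Measure.map (Z n) ℙ = Measure.map (fun ω => X ω * Y ω) ℙ) :
    ∫ ω, (∑ n, Z n ω) ^ 2 ∂ℙ
      = (π ^ 2 / 16 * N ^ 2 + (1 - π ^ 2 / 16) * N) * (li * lr) := by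
  obtain ⟨hXae, hXint, hXval, hX2int, hX2val⟩ := exp_sq_facts hli hX0 hX
  obtain ⟨hYae, hYint, hYval, hY2int, hY2val⟩ := exp_sq_facts hlr hY0 hY
  -- the product XY
  have hXYae : AEMeasurable (fun ω => X ω * Y ω) ℙ := hXae.mul hYae
  have hXYint : Integrable (fun ω => X ω * Y ω) ℙ := hXYindep.integrable_mul hXint hYint
  have hXYval : ∫ ω, X ω * Y ω ∂ℙ
      = (Real.sqrt π / 2 * Real.sqrt li) * (Real.sqrt π / 2 * Real.sqrt lr) := by
    have := hXYindep.integral_mul_eq_mul_integral hXint.1 hYint.1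
    rw [show (X * Y) = fun ω => X ω * Y ω from rfl] at this
    rw [this, hXval, hYval]
  have hsqindep : IndepFun (fun ω => X ω ^ 2) (fun ω => Y ω ^ 2) ℙ :=
    hXYindep.comp (measurable_id.pow_const 2) (measurable_id.pow_const 2)
  have hXY2int : Integrable (fun ω => (X ω * Y ω) ^ 2) ℙ := by
    have := hsqindep.integrable_mul hX2int hY2int
    refine this.congr (Filter.Eventually.of_forall fun ω => ?_)
    simp [mul_pow]
  have hXY2val : ∫ ω, (X ω * Y ω) ^ 2 ∂ℙ = li * lr := by
    have h1 := hsqindep.integral_mul_eq_mul_integral hX2int.1 hY2int.1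
    rw [show ((fun ω => X ω ^ 2) * fun ω => Y ω ^ 2) = fun ω => (X ω * Y ω)^2 by
      funext ω; simp [mul_pow]] at h1
    rw [h1, hX2val, hY2val]
  -- facts about each Z n
  have hprobXY : IsProbabilityMeasure (Measure.map (fun ω => X ω * Y ω) ℙ) :=
    Measure.isProbabilityMeasure_map hXYae
  have hZae : ∀ n, AEMeasurable (Z n) ℙ := by
    intro n
    by_contra hc
    have h1 := (hZdist n)
    rw [Measure.map_of_not_aemeasurable hc] at h1
    have h2 := hprobXY.measure_univ
    rw [← h1] at h2
    simp at h2
  have hZint : ∀ n, Integrable (Z n) ℙ := by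
    intro n
    have := (integrable_map_measure (f := Z n) (g := fun x => x)
      aestronglyMeasurable_id (hZae n)).mp (by
        rw [hZdist n]
        exact (integrable_map_measure aestronglyMeasurable_id hXYae).mpr hXYint)
    exact this
  have hZval : ∀ n, ∫ ω, Z n ω ∂ℙ
      = (Real.sqrt π / 2 * Real.sqrt li) * (Real.sqrt π / 2 * Real.sqrt lr) := by
    intro n
    have h1 : ∫ x, (id : ℝ → ℝ) x ∂(Measure.map (Z n) ℙ) = ∫ ω, Z n ω ∂ℙ :=
      integral_map (hZae n) aestronglyMeasurable_id
    have h2 : ∫ x, (id : ℝ → ℝ) x ∂(Measure.map (fun ω => X ω * Y ω) ℙ)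
        = ∫ ω, X ω * Y ω ∂ℙ := integral_map hXYae aestronglyMeasurable_id
    rw [← h1, hZdist n, h2, hXYval]
  have hsq_asm : AEStronglyMeasurable (fun x : ℝ => x ^ 2)
      (Measure.map (fun ω => X ω * Y ω) ℙ) :=
    (continuous_pow 2).aestronglyMeasurable
  have hZ2int : ∀ n, Integrable (fun ω => Z n ω ^ 2) ℙ := by
    intro n
    have := (integrable_map_measure (f := Z n) (g := fun x => x ^ 2)
      (by rw [hZdist n]; exact hsq_asm) (hZae n)).mp (by
        rw [hZdist n]
        exact (integrable_map_measure hsq_asm hXYae).mpr hXY2int)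
    exact this
  have hZ2val : ∀ n, ∫ ω, Z n ω ^ 2 ∂ℙ = li * lr := by
    intro n
    have h1 : ∫ x, (fun x : ℝ => x ^ 2) x ∂(Measure.map (Z n) ℙ) = ∫ ω, Z n ω ^ 2 ∂ℙ :=
      integral_map (hZae n) (by rw [hZdist n]; exact hsq_asm)
    have h2 : ∫ x, (fun x : ℝ => x ^ 2) x ∂(Measure.map (fun ω => X ω * Y ω) ℙ)
        = ∫ ω, (X ω * Y ω) ^ 2 ∂ℙ := integral_map hXYae hsq_asm
    rw [← h1, hZdist n, h2, hXY2val]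
  -- set abbreviations
  set A : ℝ := li * lr with hA
  set B : ℝ := π ^ 2 / 16 * (li * lr) with hB
  have hesq : ((Real.sqrt π / 2 * Real.sqrt li) * (Real.sqrt π / 2 * Real.sqrt lr))
      * ((Real.sqrt π / 2 * Real.sqrt li) * (Real.sqrt π / 2 * Real.sqrt lr)) = B := by
    have h1 : Real.sqrt π * Real.sqrt π = π := Real.mul_self_sqrt Real.pi_pos.le
    have h2 : Real.sqrt li * Real.sqrt li = li := Real.mul_self_sqrt hli.le
    have h3 : Real.sqrt lr * Real.sqrt lr = lr := Real.mul_self_sqrt hlr.le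
    calc (Real.sqrt π / 2 * Real.sqrt li * (Real.sqrt π / 2 * Real.sqrt lr))
          * (Real.sqrt π / 2 * Real.sqrt li * (Real.sqrt π / 2 * Real.sqrt lr))
        = (Real.sqrt π * Real.sqrt π) * (Real.sqrt π * Real.sqrt π)
          * ((Real.sqrt li * Real.sqrt li) * (Real.sqrt lr * Real.sqrt lr)) / 16 := by ring
      _ = B := by rw [h1, h2, h3, hB]; ring
  -- integrability of products
  have hmulint : ∀ n m : Fin N, Integrable (fun ω => Z n ω * Z m ω) ℙ := by
    intro n m
    by_cases hnm : n = m
    · subst hnm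
      refine (hZ2int n).congr (Filter.Eventually.of_forall fun ω => ?_)
      simp [sq]
    · exact (hZindep.indepFun hnm).integrable_mul (hZint n) (hZint m)
  have hmulval : ∀ n m : Fin N, ∫ ω, Z n ω * Z m ω ∂ℙ = if n = m then A else B := by
    intro n m
    by_cases hnm : n = m
    · subst hnm
      rw [if_pos rfl, ← hZ2val n]
      exact integral_congr_ae (Filter.Eventually.of_forall fun ω => by simp [sq])
    · rw [if_neg hnm]
      have h1 := (hZindep.indepFun hnm).integral_mul_eq_mul_integral (hZint n).1 (hZint m).1
      rw [show (Z n * Z m) = fun ω => Z n ω * Z m ω from rfl] at h1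
      rw [h1, hZval n, hZval m, hesq]
  -- expand the square
  have hexp : ∀ ω, (∑ n, Z n ω) ^ 2 = ∑ n, ∑ m, Z n ω * Z m ω := by
    intro ω
    rw [sq, Finset.sum_mul_sum]
  calc ∫ ω, (∑ n, Z n ω) ^ 2 ∂ℙ
      = ∫ ω, ∑ n, ∑ m, Z n ω * Z m ω ∂ℙ := by
        exact integral_congr_ae (Filter.Eventually.of_forall fun ω => hexp ω)
    _ = ∑ n, ∑ m, ∫ ω, Z n ω * Z m ω ∂ℙ := by
        rw [integral_finset_sum _ (fun n _ => integrable_finset_sum _ (fun m _ => hmulint n m))]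
        exact Finset.sum_congr rfl fun n _ => integral_finset_sum _ (fun m _ => hmulint n m)
    _ = ∑ n : Fin N, ∑ m : Fin N, (if n = m then A else B) := by
        exact Finset.sum_congr rfl fun n _ => Finset.sum_congr rfl fun m _ => hmulval n m
    _ = ∑ n : Fin N, ((N : ℝ) * B + (A - B)) := by
        refine Finset.sum_congr rfl fun n _ => ?_
        have : ∀ m : Fin N, (if n = m then A else B) = B + (if n = m then A - B else 0) := by
          intro m; split <;> ring
        simp_rw [this, Finset.sum_add_distrib, Finset.sum_const, Finset.card_univ,
          Fintype.card_fin, Finset.sum_ite_eq, Finset.mem_univ, if_pos]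
        push_cast
        ring
    _ = (π ^ 2 / 16 * N ^ 2 + (1 - π ^ 2 / 16) * N) * (li * lr) := by
        rw [Finset.sum_const, Finset.card_univ, Fintype.card_fin, hA, hB]
        push_cast
        ring
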